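/- Let T be a triangulated category with suspension functor Σ and let T be a tilting object in T, i.e. T coincides with the closure of T under suspensions, desuspensions, extensions and direct factors, and Hom(T, ΣⁿT) = 0 for all integers n ≠ 0. Suppose T = T₀ ⊕ T₁, and suppose there is a morphism f: T₀ → B such that: (1) B belongs to add(T₁) (the closure of T₁ under finite direct sums and direct summands); (2) the induced map f*: Hom(B, T₁) → Hom(T₀, T₁) is surjective; (3) the induced map f_*: Hom(T₁, T₀) → Hom(T₁, B) is injective. Choose a triangle T₀ → B → T₀* → ΣT₀ with first morphism f. Then T' = T₀* ⊕ T₁ is a tilting object in T. -/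

import Mathlib

open CategoryTheory CategoryTheory.Limits CategoryTheory.Pretriangulated

universe u v

section Statement

variable {T : Type u} [Category.{v} T] [Preadditive T] [HasZeroObject T] [HasShift T ℤ]
  [∀ n : ℤ, (CategoryTheory.shiftFunctor T n).Additive] [Pretriangulated T]
  [IsTriangulated T] [HasFiniteBiproducts T]

/-- The closure of an object `G` of a triangulated category under isomorphisms,
suspensions, desuspensions, extensions and direct factors. -/
inductive triangGen (G : T) : T → Prop
  | gen : triangGen G G
  | iso {X Y : T} (e : X ≅ Y) : triangGen G X → triangGen G Y
  | shift {X : T} (n : ℤ) : triangGen G X → triangGen G (X⟦n⟧)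
  | ext {X Y Z : T} (f : X ⟶ Y) (g : Y ⟶ Z) (h : Z ⟶ X⟦(1 : ℤ)⟧)
      (hT : Triangle.mk f g h ∈ distTriang T) : triangGen G X → triangGen G Z →
      triangGen G Y
  | smd {X Y : T} (s : Y ⟶ X) (r : X ⟶ Y) (hr : s ≫ r = 𝟙 Y) :
      triangGen G X → triangGen G Y

/-- `B` belongs to `add X`, the closure of `X` under finite direct sums and direct
summands. -/
def memAdd (X B : T) : Prop :=
  ∃ (n : ℕ) (s : B ⟶ ⨁ fun _ : Fin n => X) (r : (⨁ fun _ : Fin n => X) ⟶ B),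
    s ≫ r = 𝟙 B

/-- Monotonicity of `triangGen`. -/
lemma triangGen_mono {G G' : T} (hG : triangGen G' G) {X : T} (hX : triangGen G X) :
    triangGen G' X := by
  induction hX with
  | gen => exact hG
  | iso e _ ih => exact .iso e ih
  | shift n _ ih => exact .shift n ih
  | ext f g h hT _ _ ih₁ ih₂ => exact .ext f g h hT ih₁ ih₂
  | smd s r hr _ ih => exact .smd s r hr ih

lemma triangGen_biprod {G X Y : T} (hX : triangGen G X) (hY : triangGen G Y) :
    triangGen G (X ⊞ Y) :=
  triangGen.ext _ _ _ (binaryBiproductTriangle_distinguished X Y) hX hY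

lemma triangGen_biproduct {G X : T} (hX : triangGen G X) (n : ℕ) :
    triangGen G (⨁ fun _ : Fin n => X) := by
  induction n with
  | zero =>
    refine triangGen.smd (0 : _ ⟶ G) 0 ?_ triangGen.gen
    rw [zero_comp]
    exact (biproduct.hom_ext' _ _ (fun j => j.elim0)).symm
  | succ n ih =>
    refine triangGen.smd
      (biprod.lift (biproduct.π (fun _ : Fin (n + 1) => X) (0 : Fin (n + 1)))
        (biproduct.lift fun i : Fin n => biproduct.π (fun _ : Fin (n + 1) => X) i.succ))
      (biprod.desc (biproduct.ι (fun _ : Fin (n + 1) => X) (0 : Fin (n + 1)))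
        (biproduct.desc fun i : Fin n => biproduct.ι (fun _ : Fin (n + 1) => X) i.succ))
      ?_ (triangGen_biprod hX ih)
    rw [biprod.lift_desc, biproduct.lift_desc,
      ← Fin.sum_univ_succ (fun j : Fin (n + 1) => biproduct.π (fun _ : Fin (n+1) => X) j ≫
        biproduct.ι (fun _ : Fin (n+1) => X) j)]
    exact biproduct.total

lemma shift_shift_zero {X Y : T} {a b c : ℤ} (hc : a + b = c)
    (hz : ∀ φ : X ⟶ Y⟦c⟧, φ = 0) (ψ : X ⟶ (Y⟦a⟧)⟦b⟧) : ψ = 0 := by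
  have h := hz (ψ ≫ ((shiftFunctorAdd' T a b c hc).app Y).inv)
  have h2 : ψ = (ψ ≫ ((shiftFunctorAdd' T a b c hc).app Y).inv) ≫
      ((shiftFunctorAdd' T a b c hc).app Y).hom := by simp
  rw [h2, h, zero_comp]

lemma from_shift_one_zero {X Y : T} {c n : ℤ} (hn : c + 1 = n)
    (hz : ∀ φ : X ⟶ Y⟦c⟧, φ = 0) (ψ : X⟦(1 : ℤ)⟧ ⟶ Y⟦n⟧) : ψ = 0 := by
  obtain ⟨χ, hχ⟩ := (shiftFunctor T (1 : ℤ)).map_surjective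
    (ψ ≫ ((shiftFunctorAdd' T c 1 n hn).app Y).hom)
  rw [hz χ, Functor.map_zero] at hχ
  have h2 : ψ = (ψ ≫ ((shiftFunctorAdd' T c 1 n hn).app Y).hom) ≫
      ((shiftFunctorAdd' T c 1 n hn).app Y).inv := by simp
  rw [h2, ← hχ, zero_comp]

lemma memAdd_hom_zero_left {A B' Y : T} (h : memAdd A B')
    (hz : ∀ φ : A ⟶ Y, φ = 0) (φ : B' ⟶ Y) : φ = 0 := by
  obtain ⟨k, s, r, hsr⟩ := h
  have h0 : r ≫ φ = 0 := by
    apply biproduct.hom_ext'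
    intro j
    rw [comp_zero]
    exact hz _
  rw [← Category.id_comp φ, ← hsr, Category.assoc, h0, comp_zero]

lemma memAdd_hom_zero_right {A B' X : T} (h : memAdd A B') {n : ℤ}
    (hz : ∀ φ : X ⟶ A⟦n⟧, φ = 0) (φ : X ⟶ B'⟦n⟧) : φ = 0 := by
  obtain ⟨k, s, r, hsr⟩ := h
  have key : φ ≫ (shiftFunctor T n).map s = 0 := by
    have h2 : φ ≫ (shiftFunctor T n).map s =
        ∑ j : Fin k, (φ ≫ (shiftFunctor T n).map s ≫
          (shiftFunctor T n).map (biproduct.π (fun _ : Fin k => A) j)) ≫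
          (shiftFunctor T n).map (biproduct.ι (fun _ : Fin k => A) j) := by
      calc φ ≫ (shiftFunctor T n).map s
          = (φ ≫ (shiftFunctor T n).map s) ≫
            (shiftFunctor T n).map (𝟙 (⨁ fun _ : Fin k => A)) := by
            rw [CategoryTheory.Functor.map_id, Category.comp_id]
        _ = (φ ≫ (shiftFunctor T n).map s) ≫ (shiftFunctor T n).map
            (∑ j : Fin k, biproduct.π (fun _ : Fin k => A) j ≫
              biproduct.ι (fun _ : Fin k => A) j) := by rw [biproduct.total]
        _ = ∑ j : Fin k, (φ ≫ (shiftFunctor T n).map s ≫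
            (shiftFunctor T n).map (biproduct.π (fun _ : Fin k => A) j)) ≫
            (shiftFunctor T n).map (biproduct.ι (fun _ : Fin k => A) j) := by
            rw [Functor.map_sum, Preadditive.comp_sum]
            exact Finset.sum_congr rfl fun j _ => by
              rw [Functor.map_comp]
              simp only [Category.assoc]
    rw [h2]
    exact Finset.sum_eq_zero fun j _ => by
      rw [hz (φ ≫ (shiftFunctor T n).map s ≫
        (shiftFunctor T n).map (biproduct.π (fun _ : Fin k => A) j)), zero_comp]
  rw [← Category.comp_id φ, ← CategoryTheory.Functor.map_id, ← hsr, Functor.map_comp,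
    ← Category.assoc, key, zero_comp]

lemma vanish_of_retract {G X Y : T} {n : ℤ} (hvan : ∀ φ : G ⟶ G⟦n⟧, φ = 0)
    (iX : X ⟶ G) (pX : G ⟶ X) (hX : iX ≫ pX = 𝟙 X)
    (iY : Y ⟶ G) (pY : G ⟶ Y) (hY : iY ≫ pY = 𝟙 Y)
    (φ : X ⟶ Y⟦n⟧) : φ = 0 := by
  have h := hvan (pX ≫ φ ≫ (shiftFunctor T n).map iY)
  have h2 : iX ≫ (pX ≫ φ ≫ (shiftFunctor T n).map iY) ≫ (shiftFunctor T n).map pY = φ := by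
    rw [show iX ≫ (pX ≫ φ ≫ (shiftFunctor T n).map iY) ≫ (shiftFunctor T n).map pY =
      (iX ≫ pX) ≫ φ ≫ ((shiftFunctor T n).map iY ≫ (shiftFunctor T n).map pY) by
        simp only [Category.assoc], hX, Category.id_comp, ← Functor.map_comp, hY,
      CategoryTheory.Functor.map_id, Category.comp_id]
  rw [← h2, h, zero_comp, comp_zero]

/-- **Tilts of tilting objects in triangulated categories**
(Keller–Yang, Proposition 6.3).

Let `T` be a triangulated category with suspension `Σ` and let `T₀ ⊞ T₁` be a tilting
object of `T`: the category coincides with the closure of `T₀ ⊞ T₁` under suspensions,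
desuspensions, extensions and direct factors, and `Hom(T₀ ⊞ T₁, Σⁿ(T₀ ⊞ T₁)) = 0` for
all `n ≠ 0`.  Suppose there is a morphism `f : T₀ ⟶ B` such that (1) `B ∈ add T₁`;
(2) `f* : Hom(B, T₁) → Hom(T₀, T₁)` is surjective; (3) `f_* : Hom(T₁, T₀) → Hom(T₁, B)`
is injective.  Choose a triangle `T₀ → B → T₀* → ΣT₀` with first morphism `f`.  Then
`T' = T₀* ⊞ T₁` is again a tilting object of `T`. -/
theorem tilt_of_tilting_object
    (T₀ T₁ B Tstar : T)
    (hgen : ∀ X : T, triangGen (T₀ ⊞ T₁) X)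
    (hvanish : ∀ n : ℤ, n ≠ 0 → ∀ φ : (T₀ ⊞ T₁) ⟶ (T₀ ⊞ T₁)⟦n⟧, φ = 0)
    (f : T₀ ⟶ B)
    (h1 : memAdd T₁ B)
    (h2 : ∀ u : T₀ ⟶ T₁, ∃ v : B ⟶ T₁, f ≫ v = u)
    (h3 : ∀ u u' : T₁ ⟶ T₀, u ≫ f = u' ≫ f → u = u')
    (g : B ⟶ Tstar) (h : Tstar ⟶ T₀⟦(1 : ℤ)⟧)
    (hT : Triangle.mk f g h ∈ distTriang T) :
    (∀ n : ℤ, n ≠ 0 → ∀ φ : (Tstar ⊞ T₁) ⟶ (Tstar ⊞ T₁)⟦n⟧, φ = 0) ∧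
      (∀ X : T, triangGen (Tstar ⊞ T₁) X) := by
  constructor
  · -- vanishing
    have hv00 : ∀ n : ℤ, n ≠ 0 → ∀ φ : T₀ ⟶ T₀⟦n⟧, φ = 0 := fun n hn =>
      vanish_of_retract (hvanish n hn) biprod.inl biprod.fst biprod.inl_fst
        biprod.inl biprod.fst biprod.inl_fst
    have hv01 : ∀ n : ℤ, n ≠ 0 → ∀ φ : T₀ ⟶ T₁⟦n⟧, φ = 0 := fun n hn =>
      vanish_of_retract (hvanish n hn) biprod.inl biprod.fst biprod.inl_fst
        biprod.inr biprod.snd biprod.inr_snd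
    have hv10 : ∀ n : ℤ, n ≠ 0 → ∀ φ : T₁ ⟶ T₀⟦n⟧, φ = 0 := fun n hn =>
      vanish_of_retract (hvanish n hn) biprod.inr biprod.snd biprod.inr_snd
        biprod.inl biprod.fst biprod.inl_fst
    have hv11 : ∀ n : ℤ, n ≠ 0 → ∀ φ : T₁ ⟶ T₁⟦n⟧, φ = 0 := fun n hn =>
      vanish_of_retract (hvanish n hn) biprod.inr biprod.snd biprod.inr_snd
        biprod.inr biprod.snd biprod.inr_snd
    have hv1B : ∀ n : ℤ, n ≠ 0 → ∀ φ : T₁ ⟶ B⟦n⟧, φ = 0 := fun n hn =>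
      memAdd_hom_zero_right h1 (hv11 n hn)
    have hvB1 : ∀ n : ℤ, n ≠ 0 → ∀ φ : B ⟶ T₁⟦n⟧, φ = 0 := fun n hn =>
      memAdd_hom_zero_left h1 (hv11 n hn)
    have hv0B : ∀ n : ℤ, n ≠ 0 → ∀ φ : T₀ ⟶ B⟦n⟧, φ = 0 := fun n hn =>
      memAdd_hom_zero_right h1 (hv01 n hn)
    -- Hom(T₁, Tstar⟦n⟧) = 0
    have hv1S : ∀ n : ℤ, n ≠ 0 → ∀ φ : T₁ ⟶ Tstar⟦n⟧, φ = 0 := by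
      intro n hn φ
      by_cases hn1 : n = -1
      · subst hn1
        set E := (shiftFunctorCompIsoId T (-1 : ℤ) (1 : ℤ) (by ring)).app Tstar with hE
        obtain ⟨χ, hχ⟩ := (shiftFunctor T (1 : ℤ)).map_surjective
          (((shiftFunctor T (1 : ℤ)).map φ ≫ E.hom) ≫ h)
        have hz31 : h ≫ (shiftFunctor T (1 : ℤ)).map f = 0 := comp_distTriang_mor_zero₃₁ _ hT
        have hχf : χ ≫ f = 0 := by
          apply (shiftFunctor T (1 : ℤ)).map_injective
          rw [Functor.map_comp, hχ, Category.assoc, Functor.map_zero, hz31, comp_zero]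
        have hχ0 : χ = 0 := h3 χ 0 (by rw [hχf, zero_comp])
        have hφ'h : ((shiftFunctor T (1 : ℤ)).map φ ≫ E.hom) ≫ h = 0 := by
          rw [← hχ, hχ0, Functor.map_zero]
        obtain ⟨ψ, hψ⟩ : ∃ ψ : T₁⟦(1 : ℤ)⟧ ⟶ B, (shiftFunctor T (1 : ℤ)).map φ ≫ E.hom = ψ ≫ g :=
          Triangle.coyoneda_exact₃ _ hT _ hφ'h
        dsimp at hψ
        have hψ0 : ψ = 0 := by
          have hψ' : ψ ≫ (shiftFunctorZero T ℤ).inv.app B = 0 :=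
            from_shift_one_zero (show (-1 : ℤ) + 1 = 0 by ring)
              (hv1B (-1) (by norm_num)) _
          have hback : ψ = (ψ ≫ (shiftFunctorZero T ℤ).inv.app B) ≫
              (shiftFunctorZero T ℤ).hom.app B := by simp
          rw [hback, hψ', zero_comp]
        have hmap0 : (shiftFunctor T (1 : ℤ)).map φ = 0 := by
          have h4 : (shiftFunctor T (1 : ℤ)).map φ =
              (((shiftFunctor T (1 : ℤ)).map φ ≫ E.hom) ≫ E.inv) := by simp
          rw [h4, hψ, hψ0, zero_comp, zero_comp]
        exact (shiftFunctor T (1 : ℤ)).map_injective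
          (by rw [hmap0, Functor.map_zero])
      · have hTn := Triangle.shift_distinguished (Triangle.mk f g h) hT n
        have hmor₃ : φ ≫ ((CategoryTheory.shiftFunctor (Triangle T) n).obj
            (Triangle.mk f g h)).mor₃ = 0 :=
          shift_shift_zero (a := n) (b := 1) (c := n + 1) rfl (hv10 (n + 1) (by omega)) _
        obtain ⟨ψ, hψ⟩ := Triangle.coyoneda_exact₃ _ hTn φ hmor₃
        rw [hψ, hv1B n hn ψ]; exact zero_comp
    -- Hom(T₀, Tstar⟦n⟧) = 0 for n ∉ {0, -1}
    have hv0S : ∀ n : ℤ, n ≠ 0 → n ≠ -1 → ∀ φ : T₀ ⟶ Tstar⟦n⟧, φ = 0 := by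
      intro n hn hn1 φ
      have hTn := Triangle.shift_distinguished (Triangle.mk f g h) hT n
      have hmor₃ : φ ≫ ((CategoryTheory.shiftFunctor (Triangle T) n).obj
          (Triangle.mk f g h)).mor₃ = 0 :=
        shift_shift_zero (a := n) (b := 1) (c := n + 1) rfl (hv00 (n + 1) (by omega)) _
      obtain ⟨ψ, hψ⟩ := Triangle.coyoneda_exact₃ _ hTn φ hmor₃
      rw [hψ, hv0B n hn ψ]; exact zero_comp
    -- Hom(Tstar, T₁⟦n⟧) = 0
    have hvS1 : ∀ n : ℤ, n ≠ 0 → ∀ φ : Tstar ⟶ T₁⟦n⟧, φ = 0 := by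
      intro n hn φ
      obtain ⟨ψ, hψ⟩ : ∃ ψ : T₀⟦(1 : ℤ)⟧ ⟶ T₁⟦n⟧, φ = h ≫ ψ :=
        Triangle.yoneda_exact₃ _ hT φ (hvB1 n hn _)
      by_cases hn1 : n = 1
      · subst hn1
        obtain ⟨χ, hχ⟩ := (shiftFunctor T (1 : ℤ)).map_surjective ψ
        obtain ⟨v, hv⟩ := h2 χ
        have hψ2 : ψ = (shiftFunctor T (1 : ℤ)).map f ≫ (shiftFunctor T (1 : ℤ)).map v := by
          rw [← Functor.map_comp, hv, hχ]
        have hz : h ≫ (shiftFunctor T (1 : ℤ)).map f = 0 := comp_distTriang_mor_zero₃₁ _ hT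
        rw [hψ, hψ2, ← Category.assoc, hz, zero_comp]
      · rw [hψ, from_shift_one_zero (show n - 1 + 1 = n by ring)
          (hv01 (n - 1) (by omega)) ψ, comp_zero]
    have hvSB : ∀ n : ℤ, n ≠ 0 → ∀ φ : Tstar ⟶ B⟦n⟧, φ = 0 := fun n hn =>
      memAdd_hom_zero_right h1 (hvS1 n hn)
    have hvBS : ∀ n : ℤ, n ≠ 0 → ∀ φ : B ⟶ Tstar⟦n⟧, φ = 0 := fun n hn =>
      memAdd_hom_zero_left h1 (hv1S n hn)
    -- Hom(Tstar, Tstar⟦n⟧) = 0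
    have hvSS : ∀ n : ℤ, n ≠ 0 → ∀ φ : Tstar ⟶ Tstar⟦n⟧, φ = 0 := by
      intro n hn φ
      obtain ⟨ψ, hψ⟩ : ∃ ψ : T₀⟦(1 : ℤ)⟧ ⟶ Tstar⟦n⟧, φ = h ≫ ψ :=
        Triangle.yoneda_exact₃ _ hT φ (hvBS n hn _)
      by_cases hn1 : n = 1
      · subst hn1
        obtain ⟨χ, hχ⟩ := (shiftFunctor T (1 : ℤ)).map_surjective ψ
        obtain ⟨u, hu⟩ : ∃ u : T₀ ⟶ B, χ = u ≫ g :=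
          Triangle.coyoneda_exact₃ _ hT χ (hv00 1 one_ne_zero _)
        have hψ2 : ψ = (shiftFunctor T (1 : ℤ)).map u ≫ (shiftFunctor T (1 : ℤ)).map g := by
          rw [← Functor.map_comp, ← hu, hχ]
        have hz : h ≫ (shiftFunctor T (1 : ℤ)).map u = 0 := hvSB 1 one_ne_zero _
        rw [hψ, hψ2, ← Category.assoc, hz, zero_comp]
      · rw [hψ, from_shift_one_zero (show n - 1 + 1 = n by ring)
          (hv0S (n - 1) (by omega) (by omega)) ψ, comp_zero]
    -- assembly
    intro n hn φ
    have key : ∀ (X : T), (∀ ψ : X ⟶ Tstar⟦n⟧, ψ = 0) → (∀ ψ : X ⟶ T₁⟦n⟧, ψ = 0) →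
        ∀ ψ : X ⟶ (Tstar ⊞ T₁)⟦n⟧, ψ = 0 := by
      intro X hS h1' ψ
      have hto : (ψ ≫ (shiftFunctor T n).map biprod.fst) ≫
            (shiftFunctor T n).map biprod.inl
          + (ψ ≫ (shiftFunctor T n).map biprod.snd) ≫
            (shiftFunctor T n).map biprod.inr = ψ := by
        rw [Category.assoc, Category.assoc, ← Functor.map_comp, ← Functor.map_comp,
          ← Preadditive.comp_add, ← Functor.map_add, biprod.total,
          CategoryTheory.Functor.map_id, Category.comp_id]
      rw [← hto, hS (ψ ≫ (shiftFunctor T n).map biprod.fst),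
        h1' (ψ ≫ (shiftFunctor T n).map biprod.snd), zero_comp, zero_comp, add_zero]
    apply biprod.hom_ext'
    · rw [comp_zero]; exact key Tstar (hvSS n hn) (hvS1 n hn) _
    · rw [comp_zero]; exact key T₁ (hv1S n hn) (hv11 n hn) _
  · -- generation
    have genS : triangGen (Tstar ⊞ T₁) Tstar :=
      .smd biprod.inl biprod.fst biprod.inl_fst .gen
    have gen1 : triangGen (Tstar ⊞ T₁) T₁ :=
      .smd biprod.inr biprod.snd biprod.inr_snd .gen
    have genB : triangGen (Tstar ⊞ T₁) B := by
      obtain ⟨k, s, r, hsr⟩ := h1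
      exact .smd s r hsr (triangGen_biproduct gen1 k)
    have gen0 : triangGen (Tstar ⊞ T₁) T₀ :=
      triangGen.ext _ _ _ (inv_rot_of_distTriang _ hT) (.shift (-1) genS) genB
    exact fun X => triangGen_mono (triangGen_biprod gen0 gen1) (hgen X)

end Statement
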